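/- Let μ ≥ 1 be a rational number and define S(μ) = {(j,i) ∈ ℕ_{≥1} × ℕ : j(μ−1) − i ≥ 1}. Then: (1) S(μ) = ∅ if and only if μ = 1; (2) if μ > 1, then μ = 1 + sup_{(j,i) ∈ S(μ)} (i+1)/j; consequently, if μ, μ' ≥ 1 and S(μ) = S(μ'), then μ = μ'. -/
import Mathlib


/-- Hironaka's set `S(μ) = {(j,i) ∈ ℕ_{≥1} × ℕ : j(μ−1) − i ≥ 1}`. -/
def hironakaS (μ : ℚ) : Set (ℕ × ℕ) :=
  {p | 1 ≤ p.1 ∧ 1 ≤ (p.1 : ℚ) * (μ - 1) - (p.2 : ℚ)}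

lemma hironakaS_empty_of_one : hironakaS 1 = ∅ := by
  ext p
  simp only [hironakaS, Set.mem_setOf_eq, Set.mem_empty_iff_false, iff_false, not_and]
  intro _
  have : (0:ℚ) ≤ (p.2 : ℚ) := by positivity
  intro h
  simp at h
  linarith

lemma hironakaS_greatest (ν : ℚ) (hν : 1 < ν) :
    IsGreatest {x : ℚ | ∃ p ∈ hironakaS ν, x = ((p.2 : ℚ) + 1) / (p.1 : ℚ)} (ν - 1) := by
  set q := ν - 1 with hq
  have hq0 : 0 < q := by simp [hq]; linarith
  have hnum : 1 ≤ q.num := Rat.num_pos.mpr hq0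
  have hdenpos : 0 < (q.den : ℚ) := by exact_mod_cast q.pos
  have hmul : (q.den : ℚ) * q = (q.num : ℚ) := by
    nth_rewrite 2 [← Rat.num_div_den q]
    rw [mul_comm, div_mul_cancel₀ _ (ne_of_gt hdenpos)]
  constructor
  · refine ⟨(q.den, (q.num - 1).toNat), ⟨q.pos, ?_⟩, ?_⟩
    · have hcast : (((q.num - 1).toNat : ℕ) : ℚ) = (q.num : ℚ) - 1 := by
        have h2 : (((q.num - 1).toNat : ℕ) : ℤ) = q.num - 1 := Int.toNat_of_nonneg (by omega)
        rw [← Int.cast_natCast, h2]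
        push_cast
        ring
      simp only
      rw [hcast, hmul]
      ring_nf
      linarith
    · have hcast : (((q.num - 1).toNat : ℕ) : ℚ) = (q.num : ℚ) - 1 := by
        have h2 : (((q.num - 1).toNat : ℕ) : ℤ) = q.num - 1 := Int.toNat_of_nonneg (by omega)
        rw [← Int.cast_natCast, h2]
        push_cast
        ring
      simp only
      rw [hcast]
      rw [eq_div_iff (ne_of_gt hdenpos)]
      rw [mul_comm, hmul]
      ring
  · rintro x ⟨p, ⟨hp1, hp2⟩, hx⟩
    have hp1' : (0:ℚ) < (p.1 : ℚ) := by exact_mod_cast hp1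
    rw [hx, div_le_iff₀ hp1']
    nlinarith [hp2]

theorem hironakaS_determines_mu (μ μ' : ℚ) (hμ : 1 ≤ μ) (hμ' : 1 ≤ μ') :
    (hironakaS μ = ∅ ↔ μ = 1) ∧
    (1 < μ →
      IsGreatest {x : ℚ | ∃ p ∈ hironakaS μ, x = ((p.2 : ℚ) + 1) / (p.1 : ℚ)}
        (μ - 1)) ∧
    (hironakaS μ = hironakaS μ' → μ = μ') := by
  have empt : ∀ ν : ℚ, 1 ≤ ν → (hironakaS ν = ∅ ↔ ν = 1) := by
    intro ν hν
    constructor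
    · intro h
      by_contra hne
      have hν1 : 1 < ν := lt_of_le_of_ne hν (Ne.symm hne)
      obtain ⟨p, hp, -⟩ := (hironakaS_greatest ν hν1).1
      rw [h] at hp
      exact hp
    · rintro rfl
      exact hironakaS_empty_of_one
  refine ⟨empt μ hμ, hironakaS_greatest μ, ?_⟩
  intro hS
  rcases eq_or_lt_of_le hμ with h1 | h1
  · have : hironakaS μ = ∅ := by rw [← h1]; exact hironakaS_empty_of_one
    have h2 : μ' = 1 := (empt μ' hμ').1 (by rw [← hS]; exact this)
    rw [← h1, h2]
  · have hne : hironakaS μ' ≠ ∅ := by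
      rw [← hS]
      intro h
      have := (empt μ hμ).1 h
      linarith
    have h1' : 1 < μ' := by
      rcases eq_or_lt_of_le hμ' with h | h
      · exact absurd ((empt μ' hμ').2 h.symm) hne
      · exact h
    have := (hironakaS_greatest μ h1).unique (by rw [hS] at *; exact hironakaS_greatest μ' h1')
    linarith
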